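/- arXiv:1101.2181 — 5 statements merged into one kernel-verified Lean document; each statement's English description precedes it below -/
import Mathlib

section
/- Let G be a finite-dimensional real Lie algebra whose derived ideal G¹ = [G,G] has dimension 2. Then G¹ is commutative (abelian). -/
theorem derived_ideal_abelian_of_dim_two
    (L : Type) [LieRing L] [LieAlgebra ℝ L] [FiniteDimensional ℝ L]
    (h : Module.finrank ℝ (LieAlgebra.derivedSeries ℝ L 1) = 2) :
    ∀ X Y : L, X ∈ LieAlgebra.derivedSeries ℝ L 1 →
      Y ∈ LieAlgebra.derivedSeries ℝ L 1 → ⁅X, Y⁆ = 0 := by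
  intro X Y hX hY
  by_contra hXY
  set D := LieAlgebra.derivedSeries ℝ L 1 with hD
  set x : D := ⟨X, hX⟩ with hx
  set y : D := ⟨Y, hY⟩ with hy
  have hzmem : ⁅X, Y⁆ ∈ D := LieSubmodule.lie_mem D hY
  set z : D := ⟨⁅X, Y⁆, hzmem⟩ with hz
  -- x and y are linearly independent
  have hli : LinearIndependent ℝ ![x, y] := by
    rw [LinearIndependent.pair_iff]
    intro s t hst
    have hst' : s • X + t • Y = 0 := by
      have := congrArg (Subtype.val) hst
      simpa [x, y] using this
    have hs : s • ⁅X, Y⁆ = 0 := by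
      have : ⁅s • X + t • Y, Y⁆ = (0 : L) := by rw [hst']; simp
      simpa [add_lie, smul_lie] using this
    have ht : t • ⁅X, Y⁆ = 0 := by
      have : ⁅X, s • X + t • Y⁆ = (0 : L) := by rw [hst']; simp
      simpa [lie_add, lie_smul] using this
    constructor
    · rcases smul_eq_zero.mp hs with h' | h'
      · exact h'
      · exact absurd h' hXY
    · rcases smul_eq_zero.mp ht with h' | h'
      · exact h'
      · exact absurd h' hXY
  -- basis of D
  have hcard : Fintype.card (Fin 2) = Module.finrank ℝ D := by simp [h]
  let b : Module.Basis (Fin 2) ℝ D := basisOfLinearIndependentOfCardEqFinrank hli hcard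
  have hb : ⇑b = ![x, y] := coe_basisOfLinearIndependentOfCardEqFinrank hli hcard
  -- the adjoint action on D
  set f := LieModule.toEnd ℝ L D with hf
  have hfx : ∀ Z : L, ∀ w : D, (f Z) w = ⟨⁅Z, (w : L)⁆, LieSubmodule.lie_mem D w.2⟩ := by
    intro Z w; rfl
  -- traces vanish on the derived ideal
  have htr : ∀ Z : L, Z ∈ D → LinearMap.trace ℝ D (f Z) = 0 := by
    intro Z hZ
    refine LieModule.trace_toEnd_eq_zero_of_mem_lcs (R := ℝ) (L := L) (M := ↥D) (k := 1) le_rfl ?_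
    exact (LieModule.derivedSeries_le_lowerCentralSeries ℝ L 1) hZ
  -- compute traces using the basis
  have htrace : ∀ Z : L, LinearMap.trace ℝ D (f Z)
      = b.repr ((f Z) x) 0 + b.repr ((f Z) y) 1 := by
    intro Z
    rw [LinearMap.trace_eq_matrix_trace ℝ b, Matrix.trace]
    simp [Matrix.diag, LinearMap.toMatrix_apply, Fin.sum_univ_two, hb]
  -- f X x = 0, f X y = z, f Y x = -z, f Y y = 0
  have hfXx : (f X) x = 0 := by
    apply Subtype.ext; simp [hfx, x]
  have hfXy : (f X) y = z := by
    apply Subtype.ext; simp [hfx, y, z]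
  have hfYx : (f Y) x = -z := by
    apply Subtype.ext
    have hsk : (⁅Y, X⁆ : L) = -⁅X, Y⁆ := by rw [← lie_skew X Y, neg_neg]
    set_option linter.unnecessarySimpa false in simpa [hfx, x, z] using hsk
  have hfYy : (f Y) y = 0 := by
    apply Subtype.ext; simp [hfx, y]
  have h1 : b.repr z 1 = 0 := by
    have := htr X hX
    rw [htrace X, hfXx, hfXy] at this
    simpa using this
  have h0 : b.repr z 0 = 0 := by
    have := htr Y hY
    rw [htrace Y, hfYx, hfYy] at this
    simpa using this
  have hz0 : z = 0 := by
    have hrepr : b.repr z = 0 := by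
      ext i
      fin_cases i <;> simp [h0, h1]
    exact b.repr.map_eq_zero_iff.mp hrepr
  exact hXY (by simpa [z] using congrArg Subtype.val hz0)
end

section
/- Let G be a finite-dimensional real Lie algebra such that the derived ideal G¹ = [G,G] is abelian and has codimension 1 in G. Then all coadjoint orbits of G have dimension 0 or 2; equivalently, G is an MD-algebra whose maximal orbit dimension is at most 2. -/
/-- The skew-symmetric bilinear form `B_F(X, Y) = F ⁅X, Y⁆` associated to a
linear functional `F` on a Lie algebra. -/
noncomputable def BF {L : Type} [LieRing L] [LieAlgebra ℝ L]
    (F : Module.Dual ℝ L) : LinearMap.BilinForm ℝ L :=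
  LinearMap.mk₂ ℝ (fun X Y => F ⁅X, Y⁆)
    (fun X X' Y => by simp [add_lie])
    (fun c X Y => by simp [smul_lie])
    (fun X Y Y' => by simp [lie_add])
    (fun c X Y => by simp [lie_smul])

/-- The rank of a bilinear form: `dim V` minus the dimension of its radical. -/
noncomputable def rankB {V : Type} [AddCommGroup V] [Module ℝ V]
    (B : LinearMap.BilinForm ℝ V) : ℕ :=
  Module.finrank ℝ V - Module.finrank ℝ (LinearMap.ker B)

theorem rank_BF_le_two_of_codim_one_abelian_derived
    (L : Type) [LieRing L] [LieAlgebra ℝ L] [FiniteDimensional ℝ L]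
    [LieAlgebra.IsSolvable L]
    (habelian : IsLieAbelian (LieAlgebra.derivedSeries ℝ L 1))
    (hcodim : Module.finrank ℝ (LieAlgebra.derivedSeries ℝ L 1)
      = Module.finrank ℝ L - 1) :
    ∀ F : Module.Dual ℝ L, rankB (BF F) = 0 ∨ rankB (BF F) = 2 := by
  intro F
  have hBapp : ∀ X Y : L, BF F X Y = F ⁅X, Y⁆ := fun X Y => rfl
  by_cases h0 : BF F = 0
  · left
    unfold rankB
    rw [h0, LinearMap.ker_zero, finrank_top]
    omega
  · right
    obtain ⟨X₀, hX₀⟩ : ∃ X, BF F X ≠ 0 := by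
      by_contra h; push_neg at h; exact h0 (LinearMap.ext h)
    have hntriv : Nontrivial L := ⟨X₀, 0, by rintro rfl; exact hX₀ (map_zero _)⟩
    have hnpos : 0 < Module.finrank ℝ L := Module.finrank_pos
    set D : Submodule ℝ L := (LieAlgebra.derivedSeries ℝ L 1).toSubmodule with hDdef
    have hDrank : Module.finrank ℝ D = Module.finrank ℝ L - 1 := hcodim
    have hDne : D ≠ ⊤ := by
      intro h
      rw [h, finrank_top] at hDrank
      omega
    obtain ⟨v, hv⟩ : ∃ v, v ∉ D := by
      by_contra h; push_neg at h; exact hDne (Submodule.eq_top_iff'.2 h)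
    -- the functional μ with kernel D
    have hQ : Module.finrank ℝ (L ⧸ D) = 1 := by
      have := Submodule.finrank_quotient_add_finrank D
      omega
    have e : (L ⧸ D) ≃ₗ[ℝ] ℝ :=
      LinearEquiv.ofFinrankEq _ _ (by rw [hQ, Module.finrank_self])
    set μ0 : L →ₗ[ℝ] ℝ := e.toLinearMap ∘ₗ D.mkQ with hμ0
    have hkerμ0 : LinearMap.ker μ0 = D := by
      rw [hμ0, LinearMap.ker_comp, LinearEquiv.ker, Submodule.comap_bot, Submodule.ker_mkQ]
    have hμ0v : μ0 v ≠ 0 := fun h => hv (hkerμ0 ▸ LinearMap.mem_ker.2 h)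
    set μ : L →ₗ[ℝ] ℝ := (μ0 v)⁻¹ • μ0 with hμdef
    have hμv : μ v = 1 := by
      simp [hμdef, inv_mul_cancel₀ hμ0v]
    have hkerμ : LinearMap.ker μ = D := by
      rw [hμdef, LinearMap.ker_smul _ _ (inv_ne_zero hμ0v), hkerμ0]
    set f : L →ₗ[ℝ] ℝ := BF F v with hfdef
    have hfapp : ∀ X : L, f X = F ⁅v, X⁆ := fun X => rfl
    have hfv : f v = 0 := by rw [hfapp, lie_self, map_zero]
    -- brackets of elements of D vanish
    have hab : ∀ a b : L, a ∈ D → b ∈ D → ⁅a, b⁆ = (0 : L) := by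
      intro a b ha hb
      have ha' : a ∈ LieAlgebra.derivedSeries ℝ L 1 := ha
      have hb' : b ∈ LieAlgebra.derivedSeries ℝ L 1 := hb
      have h := habelian.trivial ⟨a, ha'⟩ ⟨b, hb'⟩
      have h2 : ((⁅(⟨a, ha'⟩ : LieAlgebra.derivedSeries ℝ L 1),
          (⟨b, hb'⟩ : LieAlgebra.derivedSeries ℝ L 1)⁆ : LieAlgebra.derivedSeries ℝ L 1) : L)
          = ⁅a, b⁆ := rfl
      rw [h] at h2
      simpa using h2.symm
    have hdec : ∀ X : L, X - μ X • v ∈ D := by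
      intro X
      rw [← hkerμ]
      simp [LinearMap.mem_ker, hμv, mul_one]
    -- the key formula
    have key : ∀ X Y : L, BF F X Y = μ X * f Y - μ Y * f X := by
      intro X Y
      have hXd : X = (X - μ X • v) + μ X • v := by abel
      have hYe : Y = (Y - μ Y • v) + μ Y • v := by abel
      have h1 : BF F (X - μ X • v) (Y - μ Y • v) = 0 := by
        rw [hBapp, hab _ _ (hdec X) (hdec Y), map_zero]
      have hfd : ∀ Z : L, f (Z - μ Z • v) = f Z := by
        intro Z
        rw [map_sub, map_smul, smul_eq_mul, hfv, mul_zero, sub_zero]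
      have hskew : ∀ Z : L, BF F Z v = - f Z := by
        intro Z
        rw [hBapp, hfapp, ← lie_skew, map_neg]
      calc BF F X Y
          = BF F ((X - μ X • v) + μ X • v) ((Y - μ Y • v) + μ Y • v) := by
            rw [← hXd, ← hYe]
        _ = μ X * f Y - μ Y * f X := by
            rw [map_add, map_smul]
            simp only [LinearMap.add_apply, LinearMap.smul_apply, map_add, map_smul,
              smul_eq_mul, h1, ← hfdef]
            rw [hfd Y, hskew (X - μ X • v), hfd X, hskew v, hfv]
            ring
    -- f ≠ 0
    have hfne : f ≠ 0 := by
      intro h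
      apply h0
      apply LinearMap.ext; intro X; apply LinearMap.ext; intro Y
      simp [key, h]
    -- kernels are not comparable
    have hnc2 : ¬ (LinearMap.ker μ ≤ LinearMap.ker f) := by
      intro hle
      apply hfne
      apply LinearMap.ext; intro X
      have hmem : X - μ X • v ∈ LinearMap.ker μ := by rw [hkerμ]; exact hdec X
      have h2 := LinearMap.mem_ker.1 (hle hmem)
      rw [map_sub, map_smul, smul_eq_mul, hfv, mul_zero, sub_zero] at h2
      simpa using h2
    have hnc1 : ¬ (LinearMap.ker f ≤ LinearMap.ker μ) := by
      intro hle
      apply h0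
      obtain ⟨u, hu⟩ : ∃ u, f u ≠ 0 := by
        by_contra h; push_neg at h; exact hfne (LinearMap.ext h)
      have hprop : ∀ X, μ X = μ u / f u * f X := by
        intro X
        have hmem : X - (f X / f u) • u ∈ LinearMap.ker f := by
          rw [LinearMap.mem_ker, map_sub, map_smul, smul_eq_mul]
          field_simp; ring
        have h3 := LinearMap.mem_ker.1 (hle hmem)
        rw [map_sub, map_smul, smul_eq_mul, sub_eq_zero] at h3
        rw [h3]; field_simp
      apply LinearMap.ext; intro X; apply LinearMap.ext; intro Y
      simp only [LinearMap.zero_apply]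
      rw [key, hprop X, hprop Y]
      ring
    obtain ⟨x, hxf, hxμ⟩ : ∃ x : L, f x = 0 ∧ μ x ≠ 0 := by
      obtain ⟨x, h1, h2⟩ := SetLike.not_le_iff_exists.1 hnc1
      exact ⟨x, LinearMap.mem_ker.1 h1, fun h => h2 (LinearMap.mem_ker.2 h)⟩
    obtain ⟨y, hyμ, hyf⟩ : ∃ y : L, μ y = 0 ∧ f y ≠ 0 := by
      obtain ⟨y, h1, h2⟩ := SetLike.not_le_iff_exists.1 hnc2
      exact ⟨y, LinearMap.mem_ker.1 h1, fun h => h2 (LinearMap.mem_ker.2 h)⟩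
    -- identify the kernel
    have hker : LinearMap.ker (BF F) = LinearMap.ker (LinearMap.prod μ f) := by
      rw [LinearMap.ker_prod]
      ext X
      constructor
      · intro hX
        have hX' : ∀ Y, BF F X Y = 0 := by
          intro Y
          have := LinearMap.mem_ker.1 hX
          rw [this]; rfl
        have e1 := hX' x
        have e2 := hX' y
        rw [key, hxf, mul_zero, zero_sub, neg_eq_zero] at e1
        rw [key, hyμ, zero_mul, sub_zero] at e2
        have hfX : f X = 0 := by
          rcases mul_eq_zero.1 e1 with h | h
          · exact absurd h hxμ
          · exact h
        have hμX : μ X = 0 := by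
          rcases mul_eq_zero.1 e2 with h | h
          · exact h
          · exact absurd h hyf
        exact Submodule.mem_inf.2 ⟨LinearMap.mem_ker.2 hμX, LinearMap.mem_ker.2 hfX⟩
      · intro hX
        obtain ⟨h1, h2⟩ := Submodule.mem_inf.1 hX
        rw [LinearMap.mem_ker]
        apply LinearMap.ext; intro Y
        rw [key, LinearMap.mem_ker.1 h1, LinearMap.mem_ker.1 h2]
        simp
    -- surjectivity of (μ, f)
    have hsurj : Function.Surjective (LinearMap.prod μ f) := by
      rintro ⟨a, b⟩
      refine ⟨(a / μ x) • x + (b / f y) • y, ?_⟩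
      have : (LinearMap.prod μ f) ((a / μ x) • x + (b / f y) • y)
          = (a / μ x * μ x + b / f y * μ y, a / μ x * f x + b / f y * f y) := by
        simp [LinearMap.prod_apply, map_add, map_smul, smul_eq_mul]
      rw [this, hxf, hyμ]
      congr 1 <;> field_simp <;> ring
    have hrn := LinearMap.finrank_range_add_finrank_ker (LinearMap.prod μ f)
    rw [LinearMap.range_eq_top.2 hsurj, finrank_top] at hrn
    have h2 : Module.finrank ℝ (ℝ × ℝ) = 2 := by
      rw [Module.finrank_prod, Module.finrank_self]
    unfold rankB
    rw [hker]
    omega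
end

section
/- Let G be the 5-dimensional real Lie algebra with basis (X₁,…,X₅) and nonzero brackets [X₁,X₃] = X₃, [X₁,X₄] = X₄, [X₁,X₅] = 2X₅, [X₂,X₃] = X₄, [X₂,X₄] = −X₃, [X₃,X₄] = X₅. Then for every linear functional F on G, the skew-symmetric bilinear form B_F(X,Y) = F([X,Y]) has rank 0 or 4. In particular G is an MD5-algebra. -/
set_option maxHeartbeats 1000000


theorem md5_rank_BF
    (L : Type) [LieRing L] [LieAlgebra ℝ L] [FiniteDimensional ℝ L]
    (b : Module.Basis (Fin 5) ℝ L)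
    (h01 : ⁅b 0, b 1⁆ = 0)
    (h02 : ⁅b 0, b 2⁆ = b 2)
    (h03 : ⁅b 0, b 3⁆ = b 3)
    (h04 : ⁅b 0, b 4⁆ = (2 : ℝ) • b 4)
    (h12 : ⁅b 1, b 2⁆ = b 3)
    (h13 : ⁅b 1, b 3⁆ = - b 2)
    (h14 : ⁅b 1, b 4⁆ = 0)
    (h23 : ⁅b 2, b 3⁆ = b 4)
    (h24 : ⁅b 2, b 4⁆ = 0)
    (h34 : ⁅b 3, b 4⁆ = 0)
    :
    ∀ F : Module.Dual ℝ L, rankB (BF F) = 0 ∨ rankB (BF F) = 4 := by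
  have h10 : ⁅b 1, b 0⁆ = 0 := by rw [← lie_skew, h01, neg_zero]
  have h20 : ⁅b 2, b 0⁆ = -b 2 := by rw [← lie_skew, h02]
  have h30 : ⁅b 3, b 0⁆ = -b 3 := by rw [← lie_skew, h03]
  have h40 : ⁅b 4, b 0⁆ = -((2:ℝ) • b 4) := by rw [← lie_skew, h04]
  have h21 : ⁅b 2, b 1⁆ = -b 3 := by rw [← lie_skew, h12]
  have h31 : ⁅b 3, b 1⁆ = -(-b 2) := by rw [← lie_skew, h13]
  have h41 : ⁅b 4, b 1⁆ = 0 := by rw [← lie_skew, h14, neg_zero]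
  have h32 : ⁅b 3, b 2⁆ = -b 4 := by rw [← lie_skew, h23]
  have h42 : ⁅b 4, b 2⁆ = 0 := by rw [← lie_skew, h24, neg_zero]
  have h43 : ⁅b 4, b 3⁆ = 0 := by rw [← lie_skew, h34, neg_zero]
  have hdim : Module.finrank ℝ L = 5 := by
    rw [Module.finrank_eq_card_basis b, Fintype.card_fin]
  intro F
  set c2 := F (b 2) with hc2
  set c3 := F (b 3) with hc3
  set c4 := F (b 4) with hc4
  have hBF : ∀ x y : L, BF F x y = F ⁅x, y⁆ := fun _ _ => rfl
  by_cases h0 : c2 = 0 ∧ c3 = 0 ∧ c4 = 0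
  · left
    obtain ⟨e2, e3, e4⟩ := h0
    have hzero : BF F = 0 := by
      apply b.ext; intro i
      apply b.ext; intro j
      fin_cases i <;> fin_cases j <;>
        simp [hBF, h01, h02, h03, h04, h12, h13, h14, h23, h24, h34,
          h10, h20, h30, h40, h21, h31, h41, h32, h42, h43,
          ← hc2, ← hc3, ← hc4, e2, e3, e4]
    rw [rankB, hzero, LinearMap.ker_zero, finrank_top, Nat.sub_self]
  · right
    set v : L := (2*c4^2) • b 1 + (2*c2*c4) • b 2 + (2*c3*c4) • b 3 +
        (-(c2^2+c3^2)) • b 4 with hv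
    have hvne : v ≠ 0 := by
      intro hv0
      have h1 : b.repr v 1 = 2*c4^2 := by
        simp [hv, Module.Basis.repr_self, Finsupp.single_apply]
      have h4 : b.repr v 4 = -(c2^2+c3^2) := by
        simp [hv, Module.Basis.repr_self, Finsupp.single_apply]
      rw [hv0, map_zero] at h1 h4
      simp only [Finsupp.coe_zero, Pi.zero_apply] at h1 h4
      have e2 : c2^2 = 0 := by nlinarith [sq_nonneg c2, sq_nonneg c3]
      have e3 : c3^2 = 0 := by nlinarith [sq_nonneg c2, sq_nonneg c3]
      have e4 : c4^2 = 0 := by linarith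
      exact h0 ⟨pow_eq_zero_iff two_ne_zero |>.mp e2,
        pow_eq_zero_iff two_ne_zero |>.mp e3, pow_eq_zero_iff two_ne_zero |>.mp e4⟩
    have hvker : v ∈ LinearMap.ker (BF F) := by
      rw [LinearMap.mem_ker]
      apply b.ext; intro j
      fin_cases j <;>
        (simp [hv, hBF, map_add, map_smul, add_lie, smul_lie,
          h01, h02, h03, h04, h12, h13, h14, h23, h24, h34,
          h10, h20, h30, h40, h21, h31, h41, h32, h42, h43,
          ← hc2, ← hc3, ← hc4] <;> ring)
    have hexp : ∀ (x : L) (j : Fin 5), BF F x (b j) =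
        ∑ i, b.repr x i * F ⁅b i, b j⁆ := by
      intro x j
      have : BF F x (b j) = ((BF F).flip (b j)) x := rfl
      rw [this]
      conv_lhs => rw [← b.sum_repr x]
      rw [map_sum]
      simp [hBF, smul_eq_mul]
    have hker : LinearMap.ker (BF F) = Submodule.span ℝ {v} := by
      apply le_antisymm
      · intro x hx
        have hxj : ∀ j : Fin 5, ∑ i, b.repr x i * F ⁅b i, b j⁆ = 0 := by
          intro j
          rw [← hexp]
          rw [LinearMap.mem_ker] at hx
          rw [hx]; rfl
        set a : Fin 5 → ℝ := fun i => b.repr x i with ha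
        have E0 := hxj 0
        have E1 := hxj 1
        have E2 := hxj 2
        have E3 := hxj 3
        have E4 := hxj 4
        simp only [Fin.sum_univ_five, ← ha,
          h01, h02, h03, h04, h12, h13, h14, h23, h24, h34,
          h10, h20, h30, h40, h21, h31, h41, h32, h42, h43,
          lie_self, map_zero, map_neg, map_smul, ← hc2, ← hc3, ← hc4,
          smul_eq_mul, mul_zero, zero_add, add_zero, mul_neg, neg_neg] at E0 E1 E2 E3 E4
        have hxr : (a 0) • b 0 + (a 1) • b 1 + (a 2) • b 2 + (a 3) • b 3 + (a 4) • b 4 = x := by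
          have := b.sum_repr x
          rwa [Fin.sum_univ_five] at this
        rw [Submodule.mem_span_singleton]
        by_cases hc40 : c4 = 0
        · have hcc : c2^2 + c3^2 ≠ 0 := by
            intro hcc
            exact h0 ⟨by nlinarith [sq_nonneg c2, sq_nonneg c3],
              by nlinarith [sq_nonneg c2, sq_nonneg c3], hc40⟩
          rw [hc40] at E0 E2 E3
          have ha2 : a 2 = 0 := by
            have h := mul_eq_zero.mp (show a 2 * (c2^2+c3^2) = 0 by
              linear_combination (-c2) * E0 + (-c3) * E1)
            tauto
          have ha3 : a 3 = 0 := by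
            have h := mul_eq_zero.mp (show a 3 * (c2^2+c3^2) = 0 by
              linear_combination (-c3) * E0 + c2 * E1)
            tauto
          have ha0 : a 0 = 0 := by
            have h := mul_eq_zero.mp (show a 0 * (c2^2+c3^2) = 0 by
              linear_combination c2 * E2 + c3 * E3)
            tauto
          have ha1 : a 1 = 0 := by
            have h := mul_eq_zero.mp (show a 1 * (c2^2+c3^2) = 0 by
              linear_combination c3 * E2 + (-c2) * E3)
            tauto
          refine ⟨-(a 4)/(c2^2+c3^2), ?_⟩
          rw [← hxr, hv]
          match_scalars <;> simp [hc40, ha0, ha1, ha2, ha3] <;> field_simp <;> ring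
        · have ha0 : a 0 = 0 := by
            have h := mul_eq_zero.mp E4
            rcases h with h | h
            · exact h
            · exact absurd (by linarith : c4 = 0) hc40
          rw [ha0] at E2 E3
          have ha2 : a 2 = a 1 * c2 / c4 := by
            field_simp
            linear_combination E3
          have ha3 : a 3 = a 1 * c3 / c4 := by
            field_simp
            linear_combination (-1) * E2
          have ha4 : a 4 = -(a 1)*(c2^2+c3^2)/(2*c4^2) := by
            field_simp
            linear_combination (-c4) * E0 + (-c2) * E3 + c3 * E2
          refine ⟨a 1/(2*c4^2), ?_⟩
          rw [← hxr, hv]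
          match_scalars <;> simp [ha0, ha2, ha3, ha4] <;> field_simp <;> ring
      · rw [Submodule.span_singleton_le_iff_mem]
        exact hvker
    rw [rankB, hker, finrank_span_singleton hvne, hdim]
end

section
/- There is no finite-dimensional real solvable MD-algebra G whose second derived ideal G² = [[G,G],[G,G]] is nontrivial, abelian, and satisfies dim G² = dim G¹ − 1, where G¹ = [G,G]. -/
set_option maxHeartbeats 1000000
set_option synthInstance.maxHeartbeats 400000


/-- A finite-dimensional real solvable Lie algebra is an MD-algebra if the rank of every
form `B_F` is either `0` or one fixed even value. -/
def IsMDAlgebra (L : Type) [LieRing L] [LieAlgebra ℝ L] [FiniteDimensional ℝ L] : Prop :=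
  LieAlgebra.IsSolvable L ∧ ∃ k : ℕ, Even k ∧
    ∀ F : Module.Dual ℝ L, rankB (BF F) = 0 ∨ rankB (BF F) = k

section Aux

variable {L : Type} [LieRing L] [LieAlgebra ℝ L] [FiniteDimensional ℝ L]

/-- The core contradiction: the hypotheses of the main theorem are inconsistent on their own. -/
theorem aux_false
    (hnontriv : LieAlgebra.derivedSeries ℝ L 2 ≠ ⊥)
    (habelian : IsLieAbelian (LieAlgebra.derivedSeries ℝ L 2))
    (hdim : Module.finrank ℝ (LieAlgebra.derivedSeries ℝ L 2)
      = Module.finrank ℝ (LieAlgebra.derivedSeries ℝ L 1) - 1) : False := by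
  classical
  set D1 : LieIdeal ℝ L := LieAlgebra.derivedSeries ℝ L 1 with hD1def
  set D2 : LieIdeal ℝ L := LieAlgebra.derivedSeries ℝ L 2 with hD2def
  have h2eq : D2 = ⁅D1, D1⁆ := by
    rw [hD1def, hD2def, LieAlgebra.derivedSeries_def, LieAlgebra.derivedSeries_def,
      LieAlgebra.derivedSeriesOfIdeal_succ]
  have h1eq : D1 = ⁅(⊤ : LieIdeal ℝ L), (⊤ : LieIdeal ℝ L)⁆ := by
    rw [hD1def, LieAlgebra.derivedSeries_def, LieAlgebra.derivedSeriesOfIdeal_succ,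
      LieAlgebra.derivedSeriesOfIdeal_zero]
  -- D2 ≤ D1
  have hle : D2 ≤ D1 := by rw [h2eq]; exact LieSubmodule.lie_le_left D1 D1
  have hleS : LieSubmodule.toSubmodule D2 ≤ LieSubmodule.toSubmodule D1 := hle
  have hrw2 : Module.finrank ℝ (↥(LieSubmodule.toSubmodule D2)) = Module.finrank ℝ (↥D2) := rfl
  have hrw1 : Module.finrank ℝ (↥(LieSubmodule.toSubmodule D1)) = Module.finrank ℝ (↥D1) := rfl
  -- finrank facts
  have h2nt : Nontrivial (↥D2) := (LieSubmodule.nontrivial_iff_ne_bot ℝ L L).mpr hnontriv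
  have h2pos : 0 < Module.finrank ℝ (↥D2) := Module.finrank_pos
  have hmono : Module.finrank ℝ (↥D2) ≤ Module.finrank ℝ (↥D1) := by
    rw [← hrw1, ← hrw2]; exact Submodule.finrank_mono hleS
  have hfr : Module.finrank ℝ (↥D1) = Module.finrank ℝ (↥D2) + 1 := by omega
  -- pick a ∈ D1 \ D2
  have hex : ∃ a, a ∈ D1 ∧ a ∉ D2 := by
    by_contra h
    push_neg at h
    have hle' : LieSubmodule.toSubmodule D1 ≤ LieSubmodule.toSubmodule D2 := fun x hx => h x hx
    have := Submodule.finrank_mono hle'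
    rw [hrw1, hrw2] at this
    omega
  obtain ⟨a, ha1, ha2⟩ := hex
  have ha0 : a ≠ 0 := fun h => ha2 (h ▸ D2.zero_mem)
  -- D1 = ℝ∙a ⊔ D2 as submodules
  have hinf : (ℝ ∙ a) ⊓ LieSubmodule.toSubmodule D2 = ⊥ := by
    rw [eq_bot_iff]
    rintro x ⟨hx1, hx2⟩
    obtain ⟨c, rfl⟩ := Submodule.mem_span_singleton.mp hx1
    rcases eq_or_ne c 0 with rfl | hc
    · simp
    · exact absurd (by simpa [smul_smul, inv_mul_cancel₀ hc] using
        (LieSubmodule.toSubmodule D2).smul_mem c⁻¹ hx2) ha2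
  have hsup_le : (ℝ ∙ a) ⊔ LieSubmodule.toSubmodule D2 ≤ LieSubmodule.toSubmodule D1 := by
    refine sup_le ?_ hleS
    rwa [Submodule.span_singleton_le_iff_mem]
  have hfrsup : Module.finrank ℝ (↥((ℝ ∙ a) ⊔ LieSubmodule.toSubmodule D2))
      = Module.finrank ℝ (↥(LieSubmodule.toSubmodule D1)) := by
    have h := Submodule.finrank_sup_add_finrank_inf_eq (ℝ ∙ a) (LieSubmodule.toSubmodule D2)
    rw [hinf, finrank_bot, finrank_span_singleton ha0] at h
    rw [hrw1, hrw2] at *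
    omega
  have hW : (ℝ ∙ a) ⊔ LieSubmodule.toSubmodule D2 = LieSubmodule.toSubmodule D1 :=
    Submodule.eq_of_le_of_finrank_le hsup_le (le_of_eq hfrsup.symm)
  -- the representation on D2
  letI : LieRing (Module.End ℝ (↥D2)) := LieRing.ofAssociativeRing
  set ρ := LieModule.toEnd ℝ L (↥D2) with hρdef
  have habel' : ∀ u v : L, u ∈ D2 → v ∈ D2 → ⁅u, v⁆ = 0 := by
    intro u v hu hv
    have h0 : (⁅(⟨u, hu⟩ : ↥D2), (⟨v, hv⟩ : ↥D2)⁆ : ↥D2) = 0 := trivial_lie_zero _ _ _ _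
    exact congrArg (Subtype.val) h0
  have hρ0 : ∀ u ∈ D2, ρ u = 0 := by
    intro u hu
    ext v
    exact habel' u v hu v.2
  set T : Module.End ℝ (↥D2) := ρ a with hTdef
  -- decomposition of elements of D1
  have hdec : ∀ z ∈ D1, ∃ c : ℝ, ∃ u ∈ D2, z = c • a + u := by
    intro z hz
    have hz' : z ∈ (ℝ ∙ a) ⊔ LieSubmodule.toSubmodule D2 := hW ▸ hz
    obtain ⟨p, hp, u, hu, heq⟩ := Submodule.mem_sup.mp hz'
    obtain ⟨c, rfl⟩ := Submodule.mem_span_singleton.mp hp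
    exact ⟨c, u, hu, heq.symm⟩
  -- T is surjective
  have hTsur : Function.Surjective T := by
    set P : Submodule ℝ L := Submodule.map (LieSubmodule.toSubmodule D2).subtype
      (LinearMap.range T) with hPdef
    have haP : ∀ v, (hv : v ∈ D2) → ⁅a, v⁆ ∈ P := by
      intro v hv
      exact ⟨T ⟨v, hv⟩, LinearMap.mem_range_self _ _, rfl⟩
    have hP : LieSubmodule.toSubmodule D2 ≤ P := by
      have hspan : LieSubmodule.toSubmodule D2
          = Submodule.span ℝ { m | ∃ x ∈ D1, ∃ n ∈ D1, ⁅x, n⁆ = m } := by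
        rw [h2eq]
        exact LieSubmodule.lieIdeal_oper_eq_linear_span' (N := D1) (I := D1)
      rw [hspan, Submodule.span_le]
      rintro m ⟨x, hx, y, hy, rfl⟩
      obtain ⟨c, u, hu, rfl⟩ := hdec x hx
      obtain ⟨d, v, hv, rfl⟩ := hdec y hy
      have hbr : ⁅c • a + u, d • a + v⁆ = c • ⁅a, v⁆ - d • ⁅a, u⁆ := by
        have hskew : ⁅u, a⁆ = -⁅a, u⁆ := by rw [← lie_skew]
        simp only [lie_add, add_lie, lie_smul, smul_lie, lie_self, smul_zero,
          habel' u v hu hv, add_zero, zero_add, hskew, smul_neg, smul_smul]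
        abel
      rw [hbr]
      exact P.sub_mem (P.smul_mem c (haP v hv)) (P.smul_mem d (haP u hu))
    intro w
    obtain ⟨y, hy, hyw⟩ := hP w.2
    obtain ⟨w', rfl⟩ := hy
    exact ⟨w', Subtype.ext hyw⟩
  have hTunit : IsUnit T :=
    (Module.End.isUnit_iff T).mpr ⟨(LinearMap.injective_iff_surjective).mpr hTsur, hTsur⟩
  obtain ⟨tu, htu⟩ := hTunit
  set S : Module.End ℝ (↥D2) := ↑tu⁻¹ with hSdef
  have hST : S * T = 1 := by rw [← htu]; exact tu.inv_mul
  have hTS : T * S = 1 := by rw [← htu]; exact tu.mul_inv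
  -- every ρ⁅x,a⁆ is a multiple of T
  have hc : ∀ x : L, ∃ c : ℝ, ρ ⁅x, a⁆ = c • T := by
    intro x
    obtain ⟨c, u, hu, heq⟩ := hdec ⁅x, a⁆ (D1.lie_mem ha1)
    refine ⟨c, ?_⟩
    rw [heq, map_add ρ, map_smul ρ, hρ0 u hu, add_zero, hTdef]
  set tr : Module.End ℝ (↥D2) →ₗ[ℝ] ℝ := LinearMap.trace ℝ (↥D2) with htrdef
  have htr1 : tr 1 = (Module.finrank ℝ (↥D2) : ℝ) := LinearMap.trace_one ℝ (↥D2)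
  by_cases hcase : ∃ x : L, ∃ c : ℝ, c ≠ 0 ∧ ρ ⁅x, a⁆ = c • T
  · -- case 1 : some nonzero multiple
    obtain ⟨x, c, hc0, hx⟩ := hcase
    have h1 : ρ x * T - T * ρ x = c • T := by
      rw [hTdef, ← Ring.lie_def, ← LieHom.map_lie]; exact hx
    have h2 : tr (S * (ρ x * T - T * ρ x)) = c * (Module.finrank ℝ (↥D2) : ℝ) := by
      rw [h1, mul_smul_comm, map_smul, hST, htr1, smul_eq_mul]
    have h3 : tr (S * (ρ x * T - T * ρ x)) = 0 := by
      rw [mul_sub, map_sub, ← mul_assoc, ← mul_assoc, hST, one_mul,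
        LinearMap.trace_mul_comm ℝ (S * ρ x) T, ← mul_assoc, hTS, one_mul, sub_self]
    rw [h3] at h2
    have h4 : (Module.finrank ℝ (↥D2) : ℝ) = 0 := by
      rcases mul_eq_zero.mp h2.symm with h | h
      · exact absurd h hc0
      · exact h
    rw [Nat.cast_eq_zero] at h4
    omega
  · -- case 2 : T commutes with everything
    push_neg at hcase
    have hcomm : ∀ x : L, Commute (ρ x) T := by
      intro x
      obtain ⟨c, hcx⟩ := hc x
      rcases eq_or_ne c 0 with rfl | hne
      · have h0 : ρ ⁅x, a⁆ = 0 := by simpa using hcx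
        have h1 : ⁅ρ x, T⁆ = 0 := by rw [hTdef, ← LieHom.map_lie]; exact h0
        rw [Ring.lie_def] at h1
        exact sub_eq_zero.mp h1
      · exact absurd hcx (hcase x c hne)
    have hcommS : ∀ x : L, Commute (ρ x) S := by
      intro x
      have h := hcomm x
      rw [← htu] at h
      exact h.units_inv_right
    -- trace (ρ z * S) = 0 for z ∈ D1
    have key : ∀ z ∈ LieSubmodule.toSubmodule D1, tr (ρ z * S) = 0 := by
      have hspan1 : LieSubmodule.toSubmodule D1
          = Submodule.span ℝ { m | ∃ x ∈ (⊤ : LieIdeal ℝ L), ∃ n ∈ (⊤ : LieIdeal ℝ L),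
              ⁅x, n⁆ = m } := by
        rw [h1eq]
        exact LieSubmodule.lieIdeal_oper_eq_linear_span' (N := (⊤ : LieIdeal ℝ L)) (I := (⊤ : LieIdeal ℝ L))
      intro z hz
      rw [hspan1] at hz
      induction hz using Submodule.span_induction with
      | mem m hm =>
        obtain ⟨x, -, y, -, rfl⟩ := hm
        rw [LieHom.map_lie, Ring.lie_def, sub_mul, map_sub]
        have e1 : ρ y * ρ x * S = (ρ y * S) * ρ x := by
          rw [mul_assoc, (hcommS x).eq, ← mul_assoc]
        rw [e1, LinearMap.trace_mul_comm ℝ (ρ y * S) (ρ x), ← mul_assoc, sub_self]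
      | zero => simp
      | add x y _ _ hx hy => rw [map_add ρ, add_mul, map_add, hx, hy, add_zero]
      | smul c x _ hx => rw [map_smul ρ, smul_mul_assoc, map_smul, hx, smul_zero]
    have hfin : tr (T * S) = 0 := key a ha1
    rw [hTS, htr1, Nat.cast_eq_zero] at hfin
    omega

end Aux

theorem no_MD_with_second_derived_codim_one
    (L : Type) [LieRing L] [LieAlgebra ℝ L] [FiniteDimensional ℝ L]
    [LieAlgebra.IsSolvable L]
    (hnontriv : LieAlgebra.derivedSeries ℝ L 2 ≠ ⊥)
    (habelian : IsLieAbelian (LieAlgebra.derivedSeries ℝ L 2))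
    (hdim : Module.finrank ℝ (LieAlgebra.derivedSeries ℝ L 2)
      = Module.finrank ℝ (LieAlgebra.derivedSeries ℝ L 1) - 1) :
    ¬ IsMDAlgebra L := by
  intro _
  exact aux_false hnontriv habelian hdim
end

section
/- Let G be a real solvable Lie algebra of dimension n ≥ 5 such that dim [G,G] = n − 1 and [[G,G],[G,G]] is abelian. Then G is an MD-algebra (i.e., every form B_F has rank 0 or one fixed maximal even value) if and only if [G,G] is abelian. -/
set_option linter.unusedSectionVars false
set_option maxHeartbeats 1000000

namespace MDProofAux

variable {L : Type} [LieRing L] [LieAlgebra ℝ L] [FiniteDimensional ℝ L]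

lemma BF_apply (F : Module.Dual ℝ L) (x y : L) : BF F x y = F ⁅x, y⁆ := rfl

lemma sep (p : Submodule ℝ L) (x : L) (hx : x ∉ p) :
    ∃ H : Module.Dual ℝ L, (∀ y ∈ p, H y = 0) ∧ H x = 1 := by
  have hπx : p.mkQ x ≠ 0 := by
    simpa [Submodule.mkQ_apply, Submodule.Quotient.mk_eq_zero] using hx
  have : ¬ ∀ φ : Module.Dual ℝ (L ⧸ p), φ (p.mkQ x) = 0 := by
    rw [Module.forall_dual_apply_eq_zero_iff]; exact hπx
  push_neg at this
  obtain ⟨φ, hφ⟩ := this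
  refine ⟨(φ (p.mkQ x))⁻¹ • (φ.comp p.mkQ), ?_, ?_⟩
  · intro y hy
    simp [Submodule.Quotient.mk_eq_zero, hy, (Submodule.Quotient.mk_eq_zero p).mpr hy]
  · simp only [LinearMap.smul_apply, LinearMap.comp_apply, Submodule.mkQ_apply, smul_eq_mul]; exact inv_mul_cancel₀ hφ

lemma dual_sep {x : L} (h : ∀ H : Module.Dual ℝ L, H x = 0) : x = 0 :=
  (Module.forall_dual_apply_eq_zero_iff ℝ x).mp h

lemma rank_le_two (F : Module.Dual ℝ L) (p : Submodule ℝ L)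
    (hp : Module.finrank ℝ L ≤ Module.finrank ℝ p + 1)
    (h : ∀ z ∈ p, ∀ w ∈ p, F ⁅z, w⁆ = 0) : rankB (BF F) ≤ 2 := by
  classical
  set n := Module.finrank ℝ L with hn
  set Ψ : p →ₗ[ℝ] Module.Dual ℝ L := LinearMap.comp (BF F) p.subtype with hΨ
  have hrange : LinearMap.range Ψ ≤ p.dualAnnihilator := by
    rintro φ ⟨z, rfl⟩
    refine (Submodule.mem_dualAnnihilator _).mpr fun w hw => ?_
    exact h z z.2 w hw
  have hann : Module.finrank ℝ p.dualAnnihilator + Module.finrank ℝ p = n := by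
    have e : Module.finrank ℝ (L ⧸ p) = Module.finrank ℝ p.dualAnnihilator := LinearEquiv.finrank_eq (Subspace.quotEquivAnnihilator p)
    have := Submodule.finrank_quotient_add_finrank p
    omega
  have h1 : Module.finrank ℝ (LinearMap.range Ψ) ≤ Module.finrank ℝ p.dualAnnihilator :=
    Submodule.finrank_mono hrange
  have h2 : Module.finrank ℝ (LinearMap.range Ψ) + Module.finrank ℝ (LinearMap.ker Ψ)
      = Module.finrank ℝ p := LinearMap.finrank_range_add_finrank_ker Ψ
  have hmap : (LinearMap.ker Ψ).map p.subtype ≤ LinearMap.ker (BF F) := by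
    rintro y ⟨z, hz, rfl⟩
    exact hz
  have h3 : Module.finrank ℝ ((LinearMap.ker Ψ).map p.subtype)
      = Module.finrank ℝ (LinearMap.ker Ψ) := Submodule.finrank_map_subtype_eq p _
  have h4 : Module.finrank ℝ (LinearMap.ker Ψ) ≤ Module.finrank ℝ (LinearMap.ker (BF F)) := by
    rw [← h3]; exact Submodule.finrank_mono hmap
  have h5 : Module.finrank ℝ p ≤ n := Submodule.finrank_le p
  unfold rankB
  omega

lemma rank_ne_one (F : Module.Dual ℝ L) : rankB (BF F) ≠ 1 := by
  intro h1
  set n := Module.finrank ℝ L with hn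
  set K := LinearMap.ker (BF F) with hK
  have hKle : Module.finrank ℝ K ≤ n := Submodule.finrank_le K
  have hrank : n - Module.finrank ℝ K = 1 := h1
  have hKne : K ≠ ⊤ := by
    intro h
    rw [h, finrank_top] at hrank
    omega
  obtain ⟨x, hx⟩ : ∃ x : L, x ∉ K := by
    by_contra hc; push_neg at hc; exact hKne (by ext y; simpa using hc y)
  have hx0 : x ≠ 0 := fun h => hx (h ▸ (LinearMap.ker (BF F)).zero_mem)
  have hfk : Module.finrank ℝ K = n - 1 := by omega
  have hinf : (ℝ ∙ x) ⊓ K = ⊥ := by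
    rw [eq_bot_iff]
    rintro y ⟨hy1, hy2⟩
    obtain ⟨t, rfl⟩ := Submodule.mem_span_singleton.mp hy1
    rcases eq_or_ne t 0 with rfl | ht
    · simp
    · exfalso
      apply hx
      have h2 := K.smul_mem t⁻¹ hy2
      rwa [smul_smul, inv_mul_cancel₀ ht, one_smul] at h2
  have hsup : (ℝ ∙ x) ⊔ K = ⊤ := by
    apply Submodule.eq_top_of_finrank_eq
    have := Submodule.finrank_sup_add_finrank_inf_eq (ℝ ∙ x) K
    rw [hinf] at this
    simp only [finrank_bot, add_zero] at this
    rw [this, finrank_span_singleton hx0]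
    omega
  apply hx
  have : BF F x = 0 := by
    ext y
    have hy : y ∈ (ℝ ∙ x) ⊔ K := hsup ▸ Submodule.mem_top
    obtain ⟨u, hu, z, hz, rfl⟩ := Submodule.mem_sup.mp hy
    obtain ⟨t, rfl⟩ := Submodule.mem_span_singleton.mp hu
    have hz0 : BF F z = 0 := hz
    have hxz : F ⁅x, z⁆ = 0 := by
      have : F ⁅z, x⁆ = 0 := by
        have := LinearMap.congr_fun hz0 x; simpa [BF_apply] using this
      rw [← lie_skew, map_neg, this, neg_zero]
    simp [BF_apply, lie_add, lie_smul, hxz]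
  exact this

lemma rankPos (F : Module.Dual ℝ L) (u v : L) (huv : F ⁅u, v⁆ ≠ 0) :
    1 ≤ rankB (BF F) := by
  have hker : LinearMap.ker (BF F) ≠ ⊤ := by
    intro h
    have : BF F u = 0 := by rw [← LinearMap.mem_ker, h]; trivial
    exact huv (by simpa [BF_apply] using LinearMap.congr_fun this v)
  have := Submodule.finrank_lt (V := L) hker
  unfold rankB
  omega

lemma plucker (F : Module.Dual ℝ L) (hr : rankB (BF F) ≤ 2) (a b c d : L) :
    F ⁅a,b⁆ * F ⁅c,d⁆ - F ⁅a,c⁆ * F ⁅b,d⁆ + F ⁅a,d⁆ * F ⁅b,c⁆ = 0 := by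
  classical
  set B := BF F with hB
  have hrange : Module.finrank ℝ (LinearMap.range B) ≤ 2 := by
    have h2 := LinearMap.finrank_range_add_finrank_ker B
    have h3 : Module.finrank ℝ (LinearMap.ker B) ≤ Module.finrank ℝ L :=
      Submodule.finrank_le _
    unfold rankB at hr
    omega
  have hnli : ¬ LinearIndependent ℝ ![B b, B c, B d] := by
    intro hli
    have hle : Submodule.span ℝ (Set.range ![B b, B c, B d]) ≤ LinearMap.range B := by
      rw [Submodule.span_le]
      rintro φ ⟨i, rfl⟩
      fin_cases i
      · exact LinearMap.mem_range_self _ b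
      · exact LinearMap.mem_range_self _ c
      · exact LinearMap.mem_range_self _ d
    have h3 := finrank_span_eq_card hli
    have h4 := Submodule.finrank_mono hle
    rw [h3] at h4
    simp at h4
    omega
  obtain ⟨g, hg, i, hgi⟩ := Fintype.not_linearIndependent_iff.mp hnli
  have hrel : ∀ x : L, g 0 * F ⁅b,x⁆ + g 1 * F ⁅c,x⁆ + g 2 * F ⁅d,x⁆ = 0 := by
    intro x
    have h5 := LinearMap.congr_fun hg x
    simp only [Fin.sum_univ_three, Matrix.cons_val_zero, Matrix.cons_val_one, Matrix.head_cons,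
      Matrix.cons_val_two, Matrix.tail_cons, LinearMap.add_apply, LinearMap.smul_apply,
      LinearMap.zero_apply, smul_eq_mul] at h5
    simpa [hB, BF_apply] using h5
  have hba : F ⁅b,a⁆ = -F ⁅a,b⁆ := by rw [show (⁅b,a⁆:L) = -⁅a,b⁆ from (lie_skew b a).symm, map_neg]
  have hca : F ⁅c,a⁆ = -F ⁅a,c⁆ := by rw [show (⁅c,a⁆:L) = -⁅a,c⁆ from (lie_skew c a).symm, map_neg]
  have hda : F ⁅d,a⁆ = -F ⁅a,d⁆ := by rw [show (⁅d,a⁆:L) = -⁅a,d⁆ from (lie_skew d a).symm, map_neg]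
  have hcb : F ⁅c,b⁆ = -F ⁅b,c⁆ := by rw [show (⁅c,b⁆:L) = -⁅b,c⁆ from (lie_skew c b).symm, map_neg]
  have hdb : F ⁅d,b⁆ = -F ⁅b,d⁆ := by rw [show (⁅d,b⁆:L) = -⁅b,d⁆ from (lie_skew d b).symm, map_neg]
  have hdc : F ⁅d,c⁆ = -F ⁅c,d⁆ := by rw [show (⁅d,c⁆:L) = -⁅c,d⁆ from (lie_skew d c).symm, map_neg]
  have hbb : F ⁅b,b⁆ = 0 := by simp
  have hcc : F ⁅c,c⁆ = 0 := by simp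
  have hdd : F ⁅d,d⁆ = 0 := by simp
  have ra := hrel a; have rb := hrel b; have rc := hrel c; have rd := hrel d
  rw [hba, hca, hda, hbb, hcb, hdb] at *
  rw [hcc, hdc] at rc
  rw [hdd] at rd
  fin_cases i
  · have key : g 0 * (F ⁅a,b⁆ * F ⁅c,d⁆ - F ⁅a,c⁆ * F ⁅b,d⁆ + F ⁅a,d⁆ * F ⁅b,c⁆) = 0 := by
      linear_combination (-F ⁅c,d⁆) * ra + (F ⁅a,d⁆) * rc + (-F ⁅a,c⁆) * rd
    rcases mul_eq_zero.mp key with h | h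
    · exact absurd h (by simpa using hgi)
    · exact h
  · have key : g 1 * (F ⁅a,b⁆ * F ⁅c,d⁆ - F ⁅a,c⁆ * F ⁅b,d⁆ + F ⁅a,d⁆ * F ⁅b,c⁆) = 0 := by
      linear_combination (F ⁅b,d⁆) * ra + (F ⁅a,b⁆) * rd + (-F ⁅a,d⁆) * rb
    rcases mul_eq_zero.mp key with h | h
    · exact absurd h (by simpa using hgi)
    · exact h
  · have key : g 2 * (F ⁅a,b⁆ * F ⁅c,d⁆ - F ⁅a,c⁆ * F ⁅b,d⁆ + F ⁅a,d⁆ * F ⁅b,c⁆) = 0 := by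
      linear_combination (-F ⁅b,c⁆) * ra + (-F ⁅a,b⁆) * rc + (F ⁅a,c⁆) * rb
    rcases mul_eq_zero.mp key with h | h
    · exact absurd h (by simpa using hgi)
    · exact h

lemma msi (F F' : Module.Dual ℝ L) (hF : rankB (BF F) ≤ 2) (hF' : rankB (BF F') ≤ 2)
    (hFF' : rankB (BF (F + F')) ≤ 2) (a b c d : L) :
    F ⁅a,b⁆ * F' ⁅c,d⁆ + F' ⁅a,b⁆ * F ⁅c,d⁆ - F ⁅a,c⁆ * F' ⁅b,d⁆ - F' ⁅a,c⁆ * F ⁅b,d⁆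
      + F ⁅a,d⁆ * F' ⁅b,c⁆ + F' ⁅a,d⁆ * F ⁅b,c⁆ = 0 := by
  have h1 := plucker F hF a b c d
  have h2 := plucker F' hF' a b c d
  have h3 := plucker (F + F') hFF' a b c d
  simp only [LinearMap.add_apply] at h3
  linear_combination h3 - h1 - h2

lemma finrank_span_singleton_le' (x : L) : Module.finrank ℝ (ℝ ∙ x) ≤ 1 := by
  rcases eq_or_ne x 0 with rfl | hx
  · rw [Submodule.span_zero_singleton]
    simp
  · rw [finrank_span_singleton hx]

lemma finrank_lieSubmodule (N : LieSubmodule ℝ L L) :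
    Module.finrank ℝ (LieSubmodule.toSubmodule N) = Module.finrank ℝ N := rfl

lemma derivedSeries_one_le (p : Submodule ℝ L) (h : ∀ u v : L, (⁅u,v⁆ : L) ∈ p) :
    LieSubmodule.toSubmodule (LieAlgebra.derivedSeries ℝ L 1) ≤ p := by
  rw [LieAlgebra.derivedSeries_def, LieAlgebra.derivedSeriesOfIdeal_succ,
    LieAlgebra.derivedSeriesOfIdeal_zero, LieSubmodule.lieIdeal_oper_eq_linear_span']
  rw [Submodule.span_le]
  rintro x ⟨u, -, v, -, rfl⟩
  exact h u v

lemma endgame (hrank : ∀ F : Module.Dual ℝ L, rankB (BF F) ≤ 2)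
    (Y Z : L) (hY : Y ∈ LieAlgebra.derivedSeries ℝ L 1) (hZ : Z ∈ LieAlgebra.derivedSeries ℝ L 1)
    (hT : (⁅Y, Z⁆ : L) ≠ 0)
    (hdim : 2 ≤ Module.finrank ℝ (LieAlgebra.derivedSeries ℝ L 1))
    (U V : L) (hUV : (⁅U, V⁆ : L) = ⁅Y, Z⁆)
    (f : Module.Dual ℝ L) (hf : ∀ c : L, (⁅V, c⁆ : L) = f c • ⁅Y, Z⁆) : False := by
  classical
  set T : L := ⁅Y, Z⁆ with hTdef
  have hmsi : ∀ F F' : Module.Dual ℝ L, ∀ a b c d : L,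
      F ⁅a,b⁆ * F' ⁅c,d⁆ + F' ⁅a,b⁆ * F ⁅c,d⁆ - F ⁅a,c⁆ * F' ⁅b,d⁆ - F' ⁅a,c⁆ * F ⁅b,d⁆
      + F ⁅a,d⁆ * F' ⁅b,c⁆ + F' ⁅a,d⁆ * F ⁅b,c⁆ = 0 :=
    fun F F' => msi F F' (hrank F) (hrank F') (hrank (F + F'))
  obtain ⟨F₀, -, hF₀T⟩ := sep (⊥ : Submodule ℝ L) T (by simpa using hT)
  -- star identity
  have hstar : ∀ c d : L, (⁅c, d⁆ : L) = f d • ⁅U, c⁆ - f c • ⁅U, d⁆ := by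
    have key : ∀ F' : Module.Dual ℝ L, ∀ c d : L,
        (F' ⁅c,d⁆ - f d * F' ⁅U,c⁆ + f c * F' ⁅U,d⁆)
        + F' T * (F₀ ⁅c,d⁆ - f d * F₀ ⁅U,c⁆ + f c * F₀ ⁅U,d⁆) = 0 := by
      intro F' c d
      have h := hmsi F₀ F' U V c d
      rw [hUV] at h
      rw [hf d, hf c] at h
      simp only [map_smul, smul_eq_mul, ← hTdef, hF₀T] at h
      linear_combination h
    have hr : ∀ c d : L, F₀ ⁅c,d⁆ - f d * F₀ ⁅U,c⁆ + f c * F₀ ⁅U,d⁆ = 0 := by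
      intro c d
      have h := key F₀ c d
      rw [hF₀T] at h
      linear_combination h / 2
    intro c d
    have hw : ∀ F' : Module.Dual ℝ L, F' (⁅c,d⁆ - (f d • ⁅U,c⁆ - f c • ⁅U,d⁆)) = 0 := by
      intro F'
      have h := key F' c d
      rw [hr c d] at h
      simp only [map_sub, map_smul, smul_eq_mul]
      linear_combination h
    have := dual_sep hw
    rwa [sub_eq_zero] at this
  -- phi relation
  set φ : L → ℝ := fun x => f ⁅U, x⁆ with hφdef
  have hphi : ∀ c d : L, φ d • (⁅U, c⁆ : L) = φ c • ⁅U, d⁆ := by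
    intro c d
    have h1 : (⁅U, ⁅c,d⁆⁆ : L) = f d • ⁅U, ⁅U,c⁆⁆ - f c • ⁅U, ⁅U,d⁆⁆ := by
      rw [hstar c d, lie_sub, lie_smul, lie_smul]
    have h2 : (⁅U, ⁅c,d⁆⁆ : L) = ⁅⁅U,c⁆, d⁆ + ⁅c, ⁅U,d⁆⁆ := leibniz_lie U c d
    have h3 : (⁅⁅U,c⁆, d⁆ : L) = f d • ⁅U, ⁅U,c⁆⁆ - f ⁅U,c⁆ • ⁅U, d⁆ := hstar _ _
    have h4 : (⁅c, ⁅U,d⁆⁆ : L) = f ⁅U,d⁆ • ⁅U, c⁆ - f c • ⁅U, ⁅U,d⁆⁆ := hstar _ _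
    have h5 := h1.symm.trans (h2.trans (by rw [h3, h4]))
    show f ⁅U,d⁆ • (⁅U, c⁆ : L) = f ⁅U,c⁆ • ⁅U, d⁆
    linear_combination (norm := module) -h5
  by_cases hφ0 : ∀ e : L, φ e = 0
  · -- f vanishes on brackets hence on derived series
    have hbr : ∀ c d : L, f ⁅c,d⁆ = 0 := by
      intro c d
      rw [hstar c d]
      simp only [map_sub, map_smul, smul_eq_mul]
      rw [show f ⁅U,c⁆ = φ c from rfl, show f ⁅U,d⁆ = φ d from rfl, hφ0 c, hφ0 d]
      ring
    have hD1ker := derivedSeries_one_le (LinearMap.ker f) (fun u v => by simp [hbr u v])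
    have hfY : f Y = 0 := hD1ker hY
    have hfZ : f Z = 0 := hD1ker hZ
    apply hT
    rw [hTdef, hstar Y Z, hfY, hfZ]
    simp
  · push_neg at hφ0
    obtain ⟨e₀, he₀⟩ := hφ0
    have hspan : ∀ c d : L, (⁅c,d⁆ : L) ∈ (ℝ ∙ (⁅U, e₀⁆ : L)) := by
      intro c d
      have hc : (⁅U, c⁆ : L) = (φ e₀)⁻¹ • (φ c • ⁅U, e₀⁆) := by
        rw [← hphi c e₀, smul_smul, inv_mul_cancel₀ he₀, one_smul]
      have hd : (⁅U, d⁆ : L) = (φ e₀)⁻¹ • (φ d • ⁅U, e₀⁆) := by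
        rw [← hphi d e₀, smul_smul, inv_mul_cancel₀ he₀, one_smul]
      rw [hstar c d, hc, hd]
      refine Submodule.mem_span_singleton.mpr ⟨f d * ((φ e₀)⁻¹ * φ c) - f c * ((φ e₀)⁻¹ * φ d), ?_⟩
      rw [smul_smul, smul_smul, sub_smul]
      module
    have hD1le := derivedSeries_one_le (ℝ ∙ (⁅U, e₀⁆ : L)) hspan
    have h1 := Submodule.finrank_mono hD1le
    rw [finrank_lieSubmodule] at h1
    have h2 : Module.finrank ℝ (ℝ ∙ (⁅U, e₀⁆ : L)) ≤ 1 := finrank_span_singleton_le' _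
    omega

lemma bigCase (hrank : ∀ F : Module.Dual ℝ L, rankB (BF F) ≤ 2)
    (Y Z : L) (hY : Y ∈ LieAlgebra.derivedSeries ℝ L 1) (hZ : Z ∈ LieAlgebra.derivedSeries ℝ L 1)
    (hT : (⁅Y, Z⁆ : L) ≠ 0)
    (hdim : 2 ≤ Module.finrank ℝ (LieAlgebra.derivedSeries ℝ L 1))
    (c₂ c₃ : L) (H₂ H₃ : Module.Dual ℝ L)
    (h2T : H₂ ⁅Y,Z⁆ = 0) (h3T : H₃ ⁅Y,Z⁆ = 0)
    (h22 : H₂ ⁅Y,c₂⁆ = 1) (h23 : H₂ ⁅Y,c₃⁆ = 0)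
    (h32 : H₃ ⁅Y,c₂⁆ = 0) (h33 : H₃ ⁅Y,c₃⁆ = 1) : False := by
  classical
  have hpl : ∀ F : Module.Dual ℝ L, ∀ a b c d : L,
      F ⁅a,b⁆ * F ⁅c,d⁆ - F ⁅a,c⁆ * F ⁅b,d⁆ + F ⁅a,d⁆ * F ⁅b,c⁆ = 0 :=
    fun F => plucker F (hrank F)
  have hmsi : ∀ F F' : Module.Dual ℝ L, ∀ a b c d : L,
      F ⁅a,b⁆ * F' ⁅c,d⁆ + F' ⁅a,b⁆ * F ⁅c,d⁆ - F ⁅a,c⁆ * F' ⁅b,d⁆ - F' ⁅a,c⁆ * F ⁅b,d⁆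
      + F ⁅a,d⁆ * F' ⁅b,c⁆ + F' ⁅a,d⁆ * F ⁅b,c⁆ = 0 :=
    fun F F' => msi F F' (hrank F) (hrank F') (hrank (F + F'))
  set lam : ℝ := H₂ ⁅Z,c₂⁆ with hlam
  set lam3 : ℝ := H₃ ⁅Z,c₃⁆ with hlam3
  -- (i)
  have hi : ∀ c : L, H₂ ⁅Z,c⁆ = lam * H₂ ⁅Y,c⁆ := by
    intro c
    have h := hpl H₂ Y Z c c₂
    rw [h2T, h22] at h
    linear_combination h - H₂ ⁅Y,c⁆ * hlam
  -- (ii)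
  have hii : ∀ c : L, H₃ ⁅Z,c⁆ = lam3 * H₃ ⁅Y,c⁆ := by
    intro c
    have h := hpl H₃ Y Z c c₃
    rw [h3T, h33] at h
    linear_combination h - H₃ ⁅Y,c⁆ * hlam3
  -- (iii)
  have hiii : lam3 = lam := by
    have h := hmsi H₂ H₃ Y Z c₂ c₃
    rw [h2T, h3T, h22, h23, h32, h33] at h
    linear_combination -h + hlam3 - hlam
  -- (iv)
  have hiv : ∀ H : Module.Dual ℝ L, H ⁅Y,Z⁆ = 0 → H ⁅Z,c₂⁆ = lam * H ⁅Y,c₂⁆ := by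
    intro H hHT
    have h := hmsi H H₃ Y Z c₂ c₃
    rw [hHT, h3T, h32, h33] at h
    have e1 : H₃ ⁅Z,c₂⁆ = 0 := by rw [hii c₂, h32, mul_zero]
    rw [e1] at h
    linear_combination h - H ⁅Y,c₂⁆ * hlam3 + H ⁅Y,c₂⁆ * hiii
  -- (v)
  have hv : ∀ H : Module.Dual ℝ L, H ⁅Y,Z⁆ = 0 → ∀ c : L, H ⁅Z,c⁆ = lam * H ⁅Y,c⁆ := by
    intro H hHT c
    have h := hmsi H H₂ Y Z c c₂
    rw [hHT, h2T, h22] at h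
    rw [hiv H hHT, hi c] at h
    linear_combination h - H ⁅Y,c⁆ * hlam
  -- construct V
  set V : L := Z - lam • Y with hV
  have hVc : ∀ c : L, (⁅V, c⁆ : L) ∈ (ℝ ∙ (⁅Y,Z⁆ : L)) := by
    intro c
    by_contra hw
    obtain ⟨H, hH0, hH1⟩ := sep _ _ hw
    have hHT : H ⁅Y,Z⁆ = 0 := hH0 _ (Submodule.mem_span_singleton_self _)
    have : H ⁅V, c⁆ = 0 := by
      rw [hV, sub_lie, smul_lie, map_sub, map_smul, hv H hHT c, smul_eq_mul]
      ring
    rw [hH1] at this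
    exact one_ne_zero this
  obtain ⟨F₀, -, hF₀T⟩ := sep (⊥ : Submodule ℝ L) ⁅Y,Z⁆ (by simpa using hT)
  set f : Module.Dual ℝ L := F₀ ∘ₗ (LieAlgebra.ad ℝ L V) with hfdef
  have hf : ∀ c : L, (⁅V, c⁆ : L) = f c • ⁅Y,Z⁆ := by
    intro c
    obtain ⟨t, ht⟩ := Submodule.mem_span_singleton.mp (hVc c)
    have : f c = t := by
      rw [hfdef]
      simp only [LinearMap.comp_apply, LieAlgebra.ad_apply]
      rw [← ht, map_smul, hF₀T, smul_eq_mul, mul_one]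
    rw [this, ht]
  have hUV : (⁅Y, V⁆ : L) = ⁅Y,Z⁆ := by
    rw [hV, lie_sub, lie_smul, lie_self, smul_zero, sub_zero]
  exact endgame hrank Y Z hY hZ hT hdim Y V hUV f hf

lemma finrank_sup_le' (p q : Submodule ℝ L) :
    Module.finrank ℝ (p ⊔ q : Submodule ℝ L) ≤ Module.finrank ℝ p + Module.finrank ℝ q := by
  have := Submodule.finrank_sup_add_finrank_inf_eq p q
  omega

lemma span_pair_neg (x y : L) : (Submodule.span ℝ {-x, y}) = Submodule.span ℝ {x, y} := by
  apply le_antisymm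
  · rw [Submodule.span_le]
    rintro z (rfl | rfl)
    · exact Submodule.neg_mem _ (Submodule.subset_span (by simp))
    · exact Submodule.subset_span (by simp)
  · rw [Submodule.span_le]
    rintro z hz
    rcases hz with h | h
    · rw [h]
      have h9 := Submodule.neg_mem (Submodule.span ℝ ({-x, y} : Set L)) (Submodule.subset_span
        (show -x ∈ ({-x, y} : Set L) by simp))
      simpa using h9
    · rw [h]
      exact Submodule.subset_span (by simp)

lemma extract (Y T : L) (hTn : T ∉ (Submodule.span ℝ (∅ : Set L)))
    (hns : ¬ ∃ S : L, ∀ c : L, (⁅Y,c⁆ : L) ∈ Submodule.span ℝ {T, S}) :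
    ∃ (c₂ c₃ : L) (H₂ H₃ : Module.Dual ℝ L), H₂ T = 0 ∧ H₃ T = 0 ∧
      H₂ ⁅Y,c₂⁆ = 1 ∧ H₂ ⁅Y,c₃⁆ = 0 ∧ H₃ ⁅Y,c₂⁆ = 0 ∧ H₃ ⁅Y,c₃⁆ = 1 := by
  push_neg at hns
  obtain ⟨c₀, hc₀⟩ := hns T
  rw [Set.pair_eq_singleton] at hc₀
  obtain ⟨c₁, hc₁⟩ := hns ⁅Y,c₀⁆
  set w₂ : L := ⁅Y,c₀⁆ with hw₂def
  set w₃ : L := ⁅Y,c₁⁆ with hw₃def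
  have hw₂T : w₂ ∉ Submodule.span ℝ ({T} : Set L) := hc₀
  have hw₂ : w₂ ∉ Submodule.span ℝ ({T, w₃} : Set L) := by
    intro hmem
    obtain ⟨a, b, hab⟩ := Submodule.mem_span_pair.mp hmem
    rcases eq_or_ne b 0 with rfl | hb
    · apply hw₂T
      rw [← hab]
      simp only [zero_smul, add_zero]
      exact Submodule.smul_mem _ a (Submodule.mem_span_singleton_self T)
    · apply hc₁
      refine Submodule.mem_span_pair.mpr ⟨-b⁻¹ * a, b⁻¹, ?_⟩
      have : w₃ = b⁻¹ • (w₂ - a • T) := by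
        rw [← hab]
        rw [add_sub_cancel_left, smul_smul, inv_mul_cancel₀ hb, one_smul]
      rw [this]
      rw [smul_sub, smul_smul]
      module
  obtain ⟨H₂, hH₂0, hH₂1⟩ := sep _ _ hw₂
  obtain ⟨H₃, hH₃0, hH₃1⟩ := sep _ _ hc₁
  refine ⟨c₀, c₁, H₂, H₃, ?_, ?_, hH₂1, ?_, ?_, hH₃1⟩
  · exact hH₂0 T (Submodule.subset_span (by simp))
  · exact hH₃0 T (Submodule.subset_span (by simp))
  · exact hH₂0 w₃ (Submodule.subset_span (by simp))
  · exact hH₃0 w₂ (Submodule.subset_span (by simp))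

lemma smallCase (hrank : ∀ F : Module.Dual ℝ L, rankB (BF F) ≤ 2)
    (Y Z : L) (hT : (⁅Y, Z⁆ : L) ≠ 0)
    (hdim : 4 ≤ Module.finrank ℝ (LieAlgebra.derivedSeries ℝ L 1))
    (S S' : L)
    (hsY : ∀ c : L, (⁅Y,c⁆ : L) ∈ Submodule.span ℝ {⁅Y,Z⁆, S})
    (hsZ : ∀ c : L, (⁅Z,c⁆ : L) ∈ Submodule.span ℝ {⁅Y,Z⁆, S'}) : False := by
  have hmsi : ∀ F F' : Module.Dual ℝ L, ∀ a b c d : L,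
      F ⁅a,b⁆ * F' ⁅c,d⁆ + F' ⁅a,b⁆ * F ⁅c,d⁆ - F ⁅a,c⁆ * F' ⁅b,d⁆ - F' ⁅a,c⁆ * F ⁅b,d⁆
      + F ⁅a,d⁆ * F' ⁅b,c⁆ + F' ⁅a,d⁆ * F ⁅b,c⁆ = 0 :=
    fun F F' => msi F F' (hrank F) (hrank F') (hrank (F + F'))
  set T : L := ⁅Y,Z⁆ with hTdef
  set W : Submodule ℝ L := Submodule.span ℝ {T, S, S'} with hW
  have hYW : ∀ c : L, (⁅Y,c⁆ : L) ∈ W := by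
    intro c
    apply Submodule.span_mono (show ({T, S} : Set L) ⊆ {T, S, S'} by
      intro x hx; rcases hx with rfl | rfl <;> simp)
    exact hsY c
  have hZW : ∀ c : L, (⁅Z,c⁆ : L) ∈ W := by
    intro c
    apply Submodule.span_mono (show ({T, S'} : Set L) ⊆ {T, S, S'} by
      intro x hx; rcases hx with rfl | rfl <;> simp)
    exact hsZ c
  have hTW : T ∈ W := Submodule.subset_span (by simp)
  obtain ⟨F₀, -, hF₀T⟩ := sep (⊥ : Submodule ℝ L) T (by simpa using hT)
  have hbrW : ∀ c d : L, (⁅c,d⁆ : L) ∈ W := by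
    intro c d
    by_contra hcd
    obtain ⟨F', hF'0, hF'1⟩ := sep W _ hcd
    have h := hmsi F₀ F' Y Z c d
    rw [show (⁅Y,Z⁆ : L) = T from rfl] at h
    rw [hF₀T, hF'0 T hTW, hF'0 _ (hYW c), hF'0 _ (hYW d), hF'0 _ (hZW c), hF'0 _ (hZW d),
      hF'1] at h
    simp at h
  have hD1le := derivedSeries_one_le W hbrW
  have h1 := Submodule.finrank_mono hD1le
  rw [finrank_lieSubmodule] at h1
  have h3 : Module.finrank ℝ W ≤ 3 := by
    rw [hW, show ({T, S, S'} : Set L) = insert T {S, S'} from rfl, Submodule.span_insert,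
      show ({S, S'} : Set L) = insert S {S'} from rfl, Submodule.span_insert]
    calc Module.finrank ℝ ((ℝ ∙ T) ⊔ ((ℝ ∙ S) ⊔ (ℝ ∙ S')) : Submodule ℝ L)
        ≤ Module.finrank ℝ (ℝ ∙ T) + Module.finrank ℝ ((ℝ ∙ S) ⊔ (ℝ ∙ S') : Submodule ℝ L) :=
          finrank_sup_le' _ _
      _ ≤ Module.finrank ℝ (ℝ ∙ T) + (Module.finrank ℝ (ℝ ∙ S) + Module.finrank ℝ (ℝ ∙ S')) :=
          by have := finrank_sup_le' (ℝ ∙ S) (ℝ ∙ S'); omega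
      _ ≤ 1 + (1 + 1) := by
          have := finrank_span_singleton_le' T
          have := finrank_span_singleton_le' S
          have := finrank_span_singleton_le' S'
          omega
      _ ≤ 3 := by omega
  omega

lemma D2_bracket : LieAlgebra.derivedSeries ℝ L 2
    = ⁅LieAlgebra.derivedSeries ℝ L 1, LieAlgebra.derivedSeries ℝ L 1⁆ :=
  LieAlgebra.derivedSeriesOfIdeal_succ ℝ L ⊤ 1

lemma derived_ne [LieAlgebra.IsSolvable L]
    (hD1 : LieAlgebra.derivedSeries ℝ L 1 ≠ ⊥) :
    LieAlgebra.derivedSeries ℝ L 2 ≠ LieAlgebra.derivedSeries ℝ L 1 := by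
  intro heq
  obtain ⟨k, hk⟩ := LieAlgebra.IsSolvable.solvable (R := ℝ) (L := L)
  have hstab : ∀ j : ℕ, LieAlgebra.derivedSeries ℝ L (j + 1) = LieAlgebra.derivedSeries ℝ L 1 := by
    intro j
    induction j with
    | zero => rfl
    | succ j ih =>
      have h1 : LieAlgebra.derivedSeries ℝ L (j + 2)
          = ⁅LieAlgebra.derivedSeries ℝ L (j+1), LieAlgebra.derivedSeries ℝ L (j+1)⁆ :=
        LieAlgebra.derivedSeriesOfIdeal_succ ℝ L ⊤ (j+1)
      rw [h1, ih, ← D2_bracket, heq]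
  apply hD1
  cases k with
  | zero =>
    have : (⊤ : LieIdeal ℝ L) = ⊥ := hk
    rw [eq_bot_iff, ← this]
    exact le_top
  | succ j => rw [← hstab j, hk]

lemma rank_eq_two_exists [LieAlgebra.IsSolvable L]
    (hn : 5 ≤ Module.finrank ℝ L)
    (hcodim : Module.finrank ℝ (LieAlgebra.derivedSeries ℝ L 1) = Module.finrank ℝ L - 1) :
    ∃ F : Module.Dual ℝ L, rankB (BF F) = 2 := by
  classical
  set D1 := LieAlgebra.derivedSeries ℝ L 1 with hD1def
  set D2 := LieAlgebra.derivedSeries ℝ L 2 with hD2def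
  have hD1ne : D1 ≠ ⊥ := by
    intro h
    have : Module.finrank ℝ D1 = 0 := by
      rw [← finrank_lieSubmodule, h]
      simp [LieSubmodule.bot_toSubmodule]
    omega
  have hle : D2 ≤ D1 := LieAlgebra.derivedSeriesOfIdeal_succ_le (I := (⊤ : LieIdeal ℝ L)) 1
  have hne : D2 ≠ D1 := derived_ne hD1ne
  obtain ⟨x₀, hx₀1, hx₀2⟩ := SetLike.exists_of_lt (lt_of_le_of_ne hle hne)
  obtain ⟨F₂, hF₂0, hF₂1⟩ := sep (LieSubmodule.toSubmodule D2) x₀ hx₀2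
  have hr2 : rankB (BF F₂) ≤ 2 := by
    apply rank_le_two F₂ (LieSubmodule.toSubmodule D1)
    · rw [finrank_lieSubmodule, hcodim]; omega
    · intro z hz w hw
      apply hF₂0
      have : (⁅z, w⁆ : L) ∈ ⁅D1, D1⁆ := LieSubmodule.lie_mem_lie hz hw
      rwa [← D2_bracket] at this
  have hexuv : ∃ u v : L, F₂ ⁅u, v⁆ ≠ 0 := by
    by_contra hc
    push_neg at hc
    have := derivedSeries_one_le (LinearMap.ker F₂) (fun u v => by simp [hc u v])
    have hx := this hx₀1
    rw [LinearMap.mem_ker, hF₂1] at hx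
    exact one_ne_zero hx
  obtain ⟨u, v, huv⟩ := hexuv
  have hge := rankPos F₂ u v huv
  have hne1 := rank_ne_one F₂
  exact ⟨F₂, by omega⟩

lemma notAbelian (hrank : ∀ F : Module.Dual ℝ L, rankB (BF F) ≤ 2)
    (hn : 5 ≤ Module.finrank ℝ L)
    (hcodim : Module.finrank ℝ (LieAlgebra.derivedSeries ℝ L 1) = Module.finrank ℝ L - 1)
    (Y Z : L) (hY : Y ∈ LieAlgebra.derivedSeries ℝ L 1) (hZ : Z ∈ LieAlgebra.derivedSeries ℝ L 1)
    (hT : (⁅Y, Z⁆ : L) ≠ 0) : False := by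
  have hdim4 : 4 ≤ Module.finrank ℝ (LieAlgebra.derivedSeries ℝ L 1) := by omega
  have hdim2 : 2 ≤ Module.finrank ℝ (LieAlgebra.derivedSeries ℝ L 1) := by omega
  by_cases hsY : ∃ S : L, ∀ c : L, (⁅Y,c⁆ : L) ∈ Submodule.span ℝ {⁅Y,Z⁆, S}
  · by_cases hsZ : ∃ S' : L, ∀ c : L, (⁅Z,c⁆ : L) ∈ Submodule.span ℝ {⁅Y,Z⁆, S'}
    · obtain ⟨S, hS⟩ := hsY
      obtain ⟨S', hS'⟩ := hsZ
      exact smallCase hrank Y Z hT hdim4 S S' hS hS'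
    · -- big case for Z (with roles of Y and Z swapped)
      have hZY : (⁅Z,Y⁆ : L) = -⁅Y,Z⁆ := (lie_skew Z Y).symm
      have hT' : (⁅Z, Y⁆ : L) ≠ 0 := by
        intro h
        rw [hZY, neg_eq_zero] at h
        exact hT h
      have hns : ¬ ∃ S : L, ∀ c : L, (⁅Z,c⁆ : L) ∈ Submodule.span ℝ {⁅Z,Y⁆, S} := by
        rintro ⟨S, hS⟩
        apply hsZ
        refine ⟨S, fun c => ?_⟩
        have h := hS c
        rwa [hZY, span_pair_neg] at h
      obtain ⟨c₂, c₃, H₂, H₃, h1, h2, h3, h4, h5, h6⟩ :=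
        extract Z ⁅Z,Y⁆ (by simpa using hT') hns
      exact bigCase hrank Z Y hZ hY hT' hdim2 c₂ c₃ H₂ H₃ h1 h2 h3 h4 h5 h6
  · obtain ⟨c₂, c₃, H₂, H₃, h1, h2, h3, h4, h5, h6⟩ :=
      extract Y ⁅Y,Z⁆ (by simpa using hT) hsY
    exact bigCase hrank Y Z hY hZ hT hdim2 c₂ c₃ H₂ H₃ h1 h2 h3 h4 h5 h6

theorem MD_iff_derived_abelian'
    [LieAlgebra.IsSolvable L]
    (hn : 5 ≤ Module.finrank ℝ L)
    (hcodim : Module.finrank ℝ (LieAlgebra.derivedSeries ℝ L 1)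
      = Module.finrank ℝ L - 1)
    (habelian2 : IsLieAbelian (LieAlgebra.derivedSeries ℝ L 2)) :
    (LieAlgebra.IsSolvable L ∧ ∃ k : ℕ, Even k ∧
      ∀ F : Module.Dual ℝ L, rankB (BF F) = 0 ∨ rankB (BF F) = k)
      ↔ IsLieAbelian (LieAlgebra.derivedSeries ℝ L 1) := by
  constructor
  · rintro ⟨hsolv, k, hkeven, hk⟩
    rw [LieAlgebra.abelian_iff_derived_succ_eq_bot]
    by_contra hne
    have hYZ : ∃ Y Z : L, Y ∈ LieAlgebra.derivedSeries ℝ L 1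
        ∧ Z ∈ LieAlgebra.derivedSeries ℝ L 1 ∧ (⁅Y, Z⁆ : L) ≠ 0 := by
      by_contra hc
      push_neg at hc
      apply hne
      have : LieAlgebra.derivedSeriesOfIdeal ℝ L (1 + 1) ⊤ = LieAlgebra.derivedSeries ℝ L 2 := by
        norm_num
      rw [this, D2_bracket, LieSubmodule.lie_eq_bot_iff]
      exact fun x hx m hm => hc x m hx hm
    obtain ⟨Y, Z, hY, hZ, hT⟩ := hYZ
    obtain ⟨F₂, hF₂⟩ := rank_eq_two_exists hn hcodim
    have hk2 : k = 2 := by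
      rcases hk F₂ with h | h
      · rw [hF₂] at h; omega
      · rw [hF₂] at h; omega
    have hrank : ∀ F : Module.Dual ℝ L, rankB (BF F) ≤ 2 := by
      intro F
      rcases hk F with h | h
      · omega
      · rw [hk2] at h; omega
    exact (notAbelian hrank hn hcodim Y Z hY hZ hT).elim
  · intro hab
    have hD2bot : LieAlgebra.derivedSeries ℝ L 2 = ⊥ := by
      have := (LieAlgebra.abelian_iff_derived_succ_eq_bot (⊤ : LieIdeal ℝ L) 1).mp hab
      have e : LieAlgebra.derivedSeriesOfIdeal ℝ L (1 + 1) ⊤ = LieAlgebra.derivedSeries ℝ L 2 := by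
        norm_num
      rwa [e] at this
    refine ⟨inferInstance, 2, ⟨1, by norm_num⟩, fun F => ?_⟩
    by_cases hB : BF F = 0
    · left
      unfold rankB
      rw [hB, LinearMap.ker_zero, finrank_top]
      omega
    · right
      have h2 : rankB (BF F) ≤ 2 := by
        apply rank_le_two F (LieSubmodule.toSubmodule (LieAlgebra.derivedSeries ℝ L 1))
        · rw [finrank_lieSubmodule, hcodim]; omega
        · intro z hz w hw
          have hmem : (⁅z, w⁆ : L) ∈ LieAlgebra.derivedSeries ℝ L 2 := by
            rw [D2_bracket]; exact LieSubmodule.lie_mem_lie hz hw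
          rw [hD2bot] at hmem
          have : (⁅z, w⁆ : L) = 0 := by simpa using hmem
          rw [this, map_zero]
      have hex : ∃ u v : L, F ⁅u, v⁆ ≠ 0 := by
        by_contra hc
        push_neg at hc
        apply hB
        ext u v
        simpa [BF_apply] using hc u v
      obtain ⟨u, v, huv⟩ := hex
      have h1 := rankPos F u v huv
      have hne1 := rank_ne_one F
      omega

end MDProofAux

theorem MD_iff_derived_abelian
    (L : Type) [LieRing L] [LieAlgebra ℝ L] [FiniteDimensional ℝ L]
    [LieAlgebra.IsSolvable L]
    (hn : 5 ≤ Module.finrank ℝ L)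
    (hcodim : Module.finrank ℝ (LieAlgebra.derivedSeries ℝ L 1)
      = Module.finrank ℝ L - 1)
    (habelian2 : IsLieAbelian (LieAlgebra.derivedSeries ℝ L 2)) :
    IsMDAlgebra L ↔ IsLieAbelian (LieAlgebra.derivedSeries ℝ L 1) := by
  have h := MDProofAux.MD_iff_derived_abelian' (L := L) hn hcodim habelian2
  unfold IsMDAlgebra
  exact h
end
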